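/- Let m be an odd positive integer, let K be a finite field with q² elements, and let L be a finite field extension of K with q^(2m) elements. Then the image under the field trace Tr_{L/K} : L → K of the set {x ∈ L : x^(q^m) + x = 0} equals the set {x ∈ K : x^q + x = 0}. -/

import Mathlib

open Polynomial Finset in
lemma aux_card_le_of_pow_eq {F : Type*} [Field F] [DecidableEq F] (a b : ℕ) (hba : b < a) (c : F)
    (S : Finset F) (hS : ∀ y ∈ S, y ^ a = c * y ^ b) : S.card ≤ a := by
  set P : F[X] := X ^ a - C c * X ^ b with hP
  have hdeg : P.natDegree = a := by
    rw [hP, natDegree_sub_eq_left_of_natDegree_lt, natDegree_X_pow]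
    rw [natDegree_X_pow]
    exact lt_of_le_of_lt (natDegree_C_mul_X_pow_le c b) hba
  have hP0 : P ≠ 0 := fun h => by
    rw [h, natDegree_zero] at hdeg; omega
  have hsub : S ⊆ P.roots.toFinset := by
    intro y hy
    rw [Multiset.mem_toFinset, mem_roots hP0]
    simp [hP, IsRoot, sub_eq_zero, hS y hy]
  calc S.card ≤ P.roots.toFinset.card := Finset.card_le_card hsub
    _ ≤ Multiset.card P.roots := Multiset.toFinset_card_le _
    _ ≤ P.natDegree := P.card_roots'
    _ = a := hdeg


lemma aux_card_le_of_pow_eq' {F : Type*} [Field F] [Fintype F] (a b : ℕ) (hba : b < a) (c : F)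
    (S : Set F) (hS : ∀ y ∈ S, y ^ a = c * y ^ b) : Nat.card S ≤ a := by
  classical
  have := aux_card_le_of_pow_eq a b hba c S.toFinset
    (fun y hy => hS y (Set.mem_toFinset.mp hy))
  rwa [← Set.ncard_eq_toFinset_card', ← Nat.card_coe_set_eq] at this


open Finset in
lemma aux_trace_formula {K L : Type*} [Field K] [Field L] [Algebra K L] [Fintype K] [Fintype L]
    (x : L) :
    algebraMap K L (Algebra.trace K L x)
      = ∑ i ∈ Finset.range (Module.finrank K L), x ^ (Fintype.card K) ^ i := by
  classical
  haveI : FiniteDimensional K L := Module.Finite.of_finite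
  obtain ⟨p, hpc⟩ := CharP.exists K
  haveI : CharP K p := hpc
  haveI : CharP L p := charP_of_injective_algebraMap' K (A := L) p
  obtain ⟨n, hp, hcard⟩ := FiniteField.card K p
  haveI : Fact p.Prime := ⟨hp⟩
  set r := Fintype.card K with hr
  have hr2 : 2 ≤ r := Fintype.one_lt_card
  -- Frobenius as K-algebra equiv
  let φ₀ : L →ₐ[K] L :=
    { toRingHom := iterateFrobenius L p n
      commutes' := fun k => by
        show iterateFrobenius L p n (algebraMap K L k) = algebraMap K L k
        rw [iterateFrobenius_def, ← map_pow, ← hcard, FiniteField.pow_card] }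
  have hφ₀ : ∀ z : L, φ₀ z = z ^ r := fun z => by
    show iterateFrobenius L p n z = _
    rw [iterateFrobenius_def, hcard]
  have hbij : Function.Bijective φ₀ :=
    (Finite.injective_iff_bijective).1 (φ₀.toRingHom.injective)
  let φ : L ≃ₐ[K] L := AlgEquiv.ofBijective φ₀ hbij
  have hφ : ∀ z : L, φ z = z ^ r := hφ₀
  have hφpow : ∀ (i : ℕ) (z : L), (φ ^ i) z = z ^ r ^ i := by
    intro i
    induction i with
    | zero => intro z; simp
    | succ i ih =>
      intro z
      rw [pow_succ, AlgEquiv.mul_apply, hφ, ih, ← pow_mul, ← pow_succ']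
  set m := Module.finrank K L with hm
  have hLcard : Fintype.card L = r ^ m := Module.card_eq_pow_finrank
  have hkey : ∀ i j : Fin m, (i : ℕ) < (j : ℕ) → φ ^ (i : ℕ) ≠ φ ^ (j : ℕ) := by
    intro i j hlt hij
    have hall : ∀ z : L, z ^ r ^ (j : ℕ) = (1 : L) * z ^ r ^ (i : ℕ) := by
      intro z
      rw [one_mul, ← hφpow, ← hφpow, hij]
    have := aux_card_le_of_pow_eq (r ^ (j : ℕ)) (r ^ (i : ℕ))
      (Nat.pow_lt_pow_right hr2 hlt) 1 Finset.univ (fun z _ => hall z)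
    rw [Finset.card_univ, hLcard] at this
    have : r ^ m ≤ r ^ (j : ℕ) := this
    have hj : (j : ℕ) < m := j.isLt
    exact absurd this (not_le.2 (Nat.pow_lt_pow_right hr2 hj))
  have hinj : Function.Injective (fun i : Fin m => φ ^ (i : ℕ)) := by
    intro i j hij
    rcases Nat.lt_trichotomy (i : ℕ) (j : ℕ) with h | h | h
    · exact absurd hij (hkey i j h)
    · exact Fin.ext h
    · exact absurd hij.symm (hkey j i h)
  have hbij2 : Function.Bijective (fun i : Fin m => φ ^ (i : ℕ)) := by
    refine (Fintype.bijective_iff_injective_and_card _).2 ⟨hinj, ?_⟩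
    rw [Fintype.card_fin, ← Nat.card_eq_fintype_card, IsGalois.card_aut_eq_finrank]
  rw [trace_eq_sum_automorphisms]
  rw [← Fintype.sum_bijective _ hbij2 (fun i : Fin m => x ^ r ^ (i : ℕ))
    (fun σ => σ x) (fun i => (hφpow i x).symm)]
  exact Fin.sum_univ_eq_sum_range (fun i => x ^ r ^ i) m

/-- For odd `m`, the trace map of the extension `L/K` of finite fields with
`|K| = q²`, `|L| = q^(2m)` maps `{x ∈ L : x^(q^m) + x = 0}` onto `{x ∈ K : x^q + x = 0}`. -/
theorem trace_image_antifixed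
    (q : ℕ) (hq : IsPrimePow q) (m : ℕ) (hm : 1 ≤ m) (hmodd : Odd m)
    (K L : Type*) [Field K] [Field L] [Algebra K L] [Fintype K] [Fintype L]
    (hK : Fintype.card K = q ^ 2) (hL : Fintype.card L = q ^ (2 * m)) :
    (fun x : L => Algebra.trace K L x) '' {x : L | x ^ (q ^ m) + x = 0}
      = {x : K | x ^ q + x = 0} := by
  classical
  haveI : FiniteDimensional K L := Module.Finite.of_finite
  have hq2 : 2 ≤ q := hq.two_le
  obtain ⟨p, k, hp, hk, hqpk⟩ := hq
  have hpp : p.Prime := Nat.prime_iff.mpr hp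
  haveI : Fact p.Prime := ⟨hpp⟩
  -- the characteristic of K is p
  obtain ⟨c, hc⟩ := CharP.exists K
  haveI : CharP K c := hc
  obtain ⟨n', hcp, hcard'⟩ := FiniteField.card K c
  have hcP : c = p := by
    have h1 : c ∣ p ^ (2 * k) := by
      have h2 : c ∣ c ^ (n' : ℕ) := dvd_pow_self c n'.ne_zero
      have h3 : c ^ (n' : ℕ) = p ^ (2 * k) := by
        rw [← hcard', hK, ← hqpk, ← pow_mul, mul_comm]
      rwa [h3] at h2
    exact (Nat.prime_dvd_prime_iff_eq hcp hpp).mp (hcp.dvd_of_dvd_pow h1)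
  subst hcP
  haveI : CharP L c := charP_of_injective_algebraMap' K (A := L) c
  -- finrank K L = m
  have hfr : Module.finrank K L = m := by
    have h := Module.card_eq_pow_finrank (K := K) (V := L)
    rw [hK, hL, ← pow_mul] at h
    have := Nat.pow_right_injective hq2 h
    omega
  -- trace formula
  have tf : ∀ x : L, algebraMap K L (Algebra.trace K L x)
      = ∑ i ∈ Finset.range m, x ^ (q ^ 2) ^ i := by
    intro x
    have := aux_trace_formula (K := K) x
    rwa [hfr, hK] at this
  -- power facts in K
  have hKfix : ∀ z : K, z ^ q ^ 2 = z := fun z => by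
    rw [← hK]; exact FiniteField.pow_card z
  have hKfix' : ∀ (z : K) (d : ℕ), z ^ (q ^ 2) ^ d = z := by
    intro z d
    induction d with
    | zero => simp
    | succ d ih => rw [pow_succ, pow_mul, ih, hKfix]
  -- Frobenius-type sum lemma in L
  have hfrob : ∀ e : ℕ, (∃ s : ℕ, q ^ s = e) → ∀ (g : ℕ → L) (T : Finset ℕ),
      (∑ i ∈ T, g i) ^ e = ∑ i ∈ T, g i ^ e := by
    rintro e ⟨s, rfl⟩ g T
    have hrepr : ∀ z : L, z ^ q ^ s = iterateFrobenius L c (k * s) z := by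
      intro z
      rw [iterateFrobenius_def, ← hqpk, ← pow_mul]
    simp_rw [hrepr]
    exact map_sum (iterateFrobenius L c (k * s)) g T
  -- key lemma : trace x ^ q = trace (x ^ q^m)
  have key : ∀ x : L, (Algebra.trace K L x) ^ q = Algebra.trace K L (x ^ q ^ m) := by
    intro x
    obtain ⟨d, hd⟩ := hmodd
    have hm1 : m - 1 = 2 * d := by omega
    apply (algebraMap K L).injective
    set y := Algebra.trace K L x with hy
    have e1 : (y ^ q) ^ q ^ (m - 1) = y ^ q := by
      rw [hm1, pow_mul q 2 d]
      exact hKfix' (y ^ q) d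
    have e2 : q * q ^ (m - 1) = q ^ m := by
      rw [← pow_succ']
      congr 1
      omega
    have stepA : algebraMap K L (y ^ q) = ∑ i ∈ Finset.range m, x ^ ((q ^ 2) ^ i * q) := by
      rw [map_pow, tf, hfrob q ⟨1, pow_one q⟩]
      simp_rw [← pow_mul]
    calc algebraMap K L (y ^ q)
        = algebraMap K L ((y ^ q) ^ q ^ (m - 1)) := by rw [e1]
      _ = (algebraMap K L (y ^ q)) ^ q ^ (m - 1) := by rw [map_pow]
      _ = (∑ i ∈ Finset.range m, x ^ ((q ^ 2) ^ i * q)) ^ q ^ (m - 1) := by rw [stepA]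
      _ = ∑ i ∈ Finset.range m, (x ^ ((q ^ 2) ^ i * q)) ^ q ^ (m - 1) :=
          hfrob _ ⟨m - 1, rfl⟩ _ _
      _ = ∑ i ∈ Finset.range m, (x ^ q ^ m) ^ (q ^ 2) ^ i := by
          refine Finset.sum_congr rfl fun i _ => ?_
          rw [← pow_mul, ← pow_mul, mul_assoc, e2, mul_comm, ← pow_mul]
      _ = algebraMap K L (Algebra.trace K L (x ^ q ^ m)) := (tf _).symm
  -- now the set equality
  ext z
  simp only [Set.mem_image, Set.mem_setOf_eq]
  constructor
  · rintro ⟨x, hx, rfl⟩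
    have h1 : x ^ q ^ m = -x := eq_neg_of_add_eq_zero_left hx
    rw [key x, h1, map_neg, neg_add_cancel]
  · intro hz
    -- counting: the map y ↦ y^q - y on K is onto {z | z^q + z = 0}
    set F : K →+* K := iterateFrobenius K c k with hFdef
    have hF : ∀ w : K, F w = w ^ q := fun w => by
      rw [hFdef, iterateFrobenius_def, hqpk]
    set f : K →+ K := F.toAddMonoidHom - AddMonoidHom.id K with hfdef
    have hf : ∀ w : K, f w = w ^ q - w := fun w => by
      simp [hfdef, hF]
    have hcount : Nat.card K = Nat.card f.range * Nat.card f.ker := by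
      rw [← Nat.card_congr (QuotientAddGroup.quotientKerEquivRange f).toEquiv]
      exact AddSubgroup.card_eq_card_quotient_mul_card_addSubgroup f.ker
    have hker_le : Nat.card f.ker ≤ q := by
      refine aux_card_le_of_pow_eq' q 1 (by omega) 1 (f.ker : Set K) fun y hy => ?_
      have h0 : f y = 0 := hy
      rw [hf] at h0
      rw [one_mul, pow_one]
      exact sub_eq_zero.mp h0
    have hrange_sub : (f.range : Set K) ⊆ {w : K | w ^ q + w = 0} := by
      rintro _ ⟨y, rfl⟩
      show (f y) ^ q + f y = 0
      rw [hf]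
      have h1 : (y ^ q - y) ^ q = (y ^ q) ^ q - y ^ q := by
        have := map_sub F (y ^ q) y
        rwa [hF, hF, hF] at this
      have h2 : (y ^ q) ^ q = y := by
        rw [← pow_mul, ← sq]
        exact hKfix y
      rw [h1, h2]
      ring
    have hrange_ge : q ≤ Nat.card f.range := by
      have hK2 : Nat.card K = q ^ 2 := by rw [Nat.card_eq_fintype_card, hK]
      have h1 : q * q ≤ Nat.card f.range * q := by
        calc q * q = q ^ 2 := (sq q).symm
          _ = Nat.card f.range * Nat.card f.ker := by rw [← hK2, hcount]
          _ ≤ Nat.card f.range * q := Nat.mul_le_mul_left _ hker_le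
      exact Nat.le_of_mul_le_mul_right h1 (by omega)
    have hT_le : Nat.card {w : K | w ^ q + w = 0} ≤ q := by
      refine aux_card_le_of_pow_eq' q 1 (by omega) (-1) _ fun y hy => ?_
      have h0 : y ^ q + y = 0 := hy
      rw [pow_one]
      have : y ^ q = -y := eq_neg_of_add_eq_zero_left h0
      rw [this]; ring
    have heq : (f.range : Set K) = {w : K | w ^ q + w = 0} := by
      apply Set.eq_of_subset_of_ncard_le hrange_sub
      · rw [← Nat.card_coe_set_eq, ← Nat.card_coe_set_eq]
        calc Nat.card {w : K | w ^ q + w = 0} ≤ q := hT_le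
          _ ≤ Nat.card f.range := hrange_ge
          _ = Nat.card (f.range : Set K) := rfl
    have hzmem : z ∈ (f.range : Set K) := heq ▸ hz
    obtain ⟨y, hy⟩ := hzmem
    obtain ⟨w, hw⟩ := Algebra.trace_surjective K L y
    refine ⟨w ^ q ^ m - w, ?_, ?_⟩
    · show (w ^ q ^ m - w) ^ q ^ m + (w ^ q ^ m - w) = 0
      have hsub : (w ^ q ^ m - w) ^ q ^ m = (w ^ q ^ m) ^ q ^ m - (w ^ q ^ m) := by
        have hrepr : ∀ u : L, u ^ q ^ m = iterateFrobenius L c (k * m) u := by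
          intro u
          rw [iterateFrobenius_def, ← hqpk, ← pow_mul]
        rw [hrepr, hrepr, hrepr, map_sub]
      have hww : (w ^ q ^ m) ^ q ^ m = w := by
        rw [← pow_mul, ← pow_add, ← two_mul, ← hL]
        exact FiniteField.pow_card w
      rw [hsub, hww]
      ring
    · show Algebra.trace K L (w ^ q ^ m - w) = z
      rw [map_sub, ← key w, hw, ← hf y, hy]
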